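/- If two vertex-cone collections 𝔊₁ and 𝔊₂ have equal supports, then their convex hull 𝔊₁ ⊕ 𝔊₂ is again a vertex-cone collection, and Supp(𝔊₁ ⊕ 𝔊₂) = Supp(𝔊₁) = Supp(𝔊₂). -/

import Mathlib

open scoped Pointwise RealInnerProductSpace

noncomputable section

/-- A vertex-cone collection: a finite nonempty set of vertices in W together with
full-dimensional convex polyhedral cones (in W*, identified with W via the inner
product) satisfying the defining inequalities ℓ(v) ≤ ℓ(u). -/
structure VCC (W : Type*) [NormedAddCommGroup W] [InnerProductSpace ℝ W] where
  verts : Set W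
  finite : verts.Finite
  nonempty : verts.Nonempty
  N : W → Set W
  polyhedral : ∀ v ∈ verts, ∃ s : Finset W, N v = {x | ∀ ℓ ∈ s, ⟪ℓ, x⟫ ≤ 0}
  fullDim : ∀ v ∈ verts, (interior (N v)).Nonempty
  ineq : ∀ v ∈ verts, ∀ u ∈ verts, ∀ ℓ ∈ N v, ⟪ℓ, v⟫ ≤ ⟪ℓ, u⟫

/-- The support of a vertex-cone collection. -/
def VCC.Supp {W : Type*} [NormedAddCommGroup W] [InnerProductSpace ℝ W] (G : VCC W) :
    Set W := ⋃ v ∈ G.verts, G.N v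

section Aux

variable {W : Type*} [NormedAddCommGroup W] [InnerProductSpace ℝ W]

lemma polySet_closed (s : Finset W) : IsClosed {x : W | ∀ ℓ ∈ s, ⟪ℓ, x⟫ ≤ 0} := by
  have h : {x : W | ∀ ℓ ∈ s, ⟪ℓ, x⟫ ≤ 0} = ⋂ ℓ ∈ (s : Set W), {x : W | ⟪ℓ, x⟫ ≤ 0} := by
    ext x; simp
  rw [h]
  exact isClosed_biInter fun ℓ _ =>
    isClosed_le (continuous_const.inner continuous_id) continuous_const

lemma polySet_convex (s : Finset W) : Convex ℝ {x : W | ∀ ℓ ∈ s, ⟪ℓ, x⟫ ≤ 0} := by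
  have h : {x : W | ∀ ℓ ∈ s, ⟪ℓ, x⟫ ≤ 0} = ⋂ ℓ ∈ (s : Set W), {x : W | ⟪ℓ, x⟫ ≤ 0} := by
    ext x; simp
  rw [h]
  refine convex_iInter₂ fun ℓ _ => ?_
  intro x hx y hy a b ha hb hab
  simp only [Set.mem_setOf_eq, inner_add_right, real_inner_smul_right] at *
  nlinarith

lemma VCC.N_closed (G : VCC W) {v : W} (hv : v ∈ G.verts) : IsClosed (G.N v) := by
  obtain ⟨s, hs⟩ := G.polyhedral v hv
  rw [hs]; exact polySet_closed s

lemma VCC.N_convex (G : VCC W) {v : W} (hv : v ∈ G.verts) : Convex ℝ (G.N v) := by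
  obtain ⟨s, hs⟩ := G.polyhedral v hv
  rw [hs]; exact polySet_convex s

lemma mem_closure_interior_of_convex {C : Set W} (hC : Convex ℝ C) {x y : W}
    (hx : x ∈ C) (hy : y ∈ interior C) : x ∈ closure (interior C) := by
  have key : ∀ n : ℕ, (1 - (1:ℝ)/(n+1)) • x + ((1:ℝ)/(n+1)) • y ∈ interior C := by
    intro n
    refine hC.combo_self_interior_mem_interior hx hy ?_ ?_ (by ring)
    · have h1 : (1:ℝ)/(n+1) ≤ 1 := by
        rw [div_le_one (by positivity)]; linarith [Nat.cast_nonneg (α := ℝ) n]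
      linarith
    · positivity
  have ht : Filter.Tendsto (fun n : ℕ => (1:ℝ)/(n+1)) Filter.atTop (nhds 0) :=
    tendsto_one_div_add_atTop_nhds_zero_nat
  have htd : Filter.Tendsto (fun n : ℕ => (1 - (1:ℝ)/(n+1)) • x + ((1:ℝ)/(n+1)) • y)
      Filter.atTop (nhds ((1 - (0:ℝ)) • x + (0:ℝ) • y)) :=
    ((tendsto_const_nhds.sub ht).smul tendsto_const_nhds).add (ht.smul tendsto_const_nhds)
  simp only [sub_zero, one_smul, zero_smul, add_zero] at htd
  exact mem_closure_of_tendsto htd (Filter.Eventually.of_forall key)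

lemma hyperplane_interior_empty {d : W} (hd : d ≠ 0) :
    interior {x : W | ⟪x, d⟫ = 0} = ∅ := by
  rw [Set.eq_empty_iff_forall_notMem]
  intro x hx
  obtain ⟨ε, hε, hball⟩ := Metric.isOpen_iff.mp isOpen_interior x hx
  have hdn : (0:ℝ) < ‖d‖ := norm_pos_iff.mpr hd
  set c : ℝ := ε / (2 * ‖d‖) with hc
  have hcpos : 0 < c := by positivity
  have hcd : ‖d‖ * c = ε / 2 := by rw [hc]; field_simp
  have hy : x + c • d ∈ Metric.ball x ε := by
    rw [Metric.mem_ball, dist_eq_norm]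
    simp only [add_sub_cancel_left, norm_smul, Real.norm_eq_abs, abs_of_pos hcpos]
    linarith [hcd, mul_comm c ‖d‖]
  have h1 := interior_subset hx
  have h2 := interior_subset (hball hy)
  simp only [Set.mem_setOf_eq] at h1 h2
  rw [inner_add_left, real_inner_smul_left, h1, real_inner_self_eq_norm_sq] at h2
  nlinarith [mul_pos hcpos (pow_pos hdn 2)]

lemma sUnion_interior_empty {𝒮 : Set (Set W)} (h : 𝒮.Finite)
    (hP : ∀ s ∈ 𝒮, IsClosed s ∧ interior s = ∅) :
    interior (⋃₀ 𝒮) = ∅ ∧ IsClosed (⋃₀ 𝒮) := by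
  revert hP
  refine Set.Finite.induction_on
    (motive := fun 𝒯 _ => (∀ s ∈ 𝒯, IsClosed s ∧ interior s = ∅) →
      interior (⋃₀ 𝒯) = ∅ ∧ IsClosed (⋃₀ 𝒯)) _ h (by simp) ?_
  intro a 𝒮' _ _ ih hP
  obtain ⟨h1, h2⟩ := hP a (Set.mem_insert _ _)
  obtain ⟨ih1, ih2⟩ := ih (fun s hs => hP s (Set.mem_insert_of_mem _ hs))
  rw [Set.sUnion_insert]
  exact ⟨by rw [interior_union_isClosed_of_interior_empty h1 ih1, h2], h1.union ih2⟩

/-- The vertex set of the convex hull of two vertex-cone collections. -/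
def hullVerts (G₁ G₂ : VCC W) : Set W :=
  ({v | v ∈ G₁.verts ∧ v ∈ G₂.verts ∧ (interior (G₁.N v ∩ G₂.N v)).Nonempty} ∪
   {v | v ∈ G₁.verts ∧ v ∉ G₂.verts ∧
      ∃ ℓ ∈ interior (G₁.N v), ∀ u ∈ G₂.verts, ⟪ℓ, v⟫ < ⟪ℓ, u⟫} ∪
   {v | v ∈ G₂.verts ∧ v ∉ G₁.verts ∧
      ∃ ℓ ∈ interior (G₂.N v), ∀ u ∈ G₁.verts, ⟪ℓ, v⟫ < ⟪ℓ, u⟫})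

open Classical in
/-- The normal cones of the convex hull of two vertex-cone collections. -/
def hullN (G₁ G₂ : VCC W) (v : W) : Set W :=
  if v ∈ G₁.verts ∧ v ∈ G₂.verts then G₁.N v ∩ G₂.N v
  else if v ∈ G₁.verts then {ℓ ∈ G₁.N v | ∀ u ∈ G₂.verts, ⟪ℓ, v⟫ ≤ ⟪ℓ, u⟫}
  else {ℓ ∈ G₂.N v | ∀ u ∈ G₁.verts, ⟪ℓ, v⟫ ≤ ⟪ℓ, u⟫}

lemma hullN_a (G₁ G₂ : VCC W) {v : W} (h1 : v ∈ G₁.verts) (h2 : v ∈ G₂.verts) :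
    hullN G₁ G₂ v = G₁.N v ∩ G₂.N v := by
  rw [hullN, if_pos ⟨h1, h2⟩]

lemma hullN_b (G₁ G₂ : VCC W) {v : W} (h1 : v ∈ G₁.verts) (h2 : v ∉ G₂.verts) :
    hullN G₁ G₂ v = {ℓ ∈ G₁.N v | ∀ u ∈ G₂.verts, ⟪ℓ, v⟫ ≤ ⟪ℓ, u⟫} := by
  rw [hullN, if_neg (fun h => h2 h.2), if_pos h1]

lemma hullN_c (G₁ G₂ : VCC W) {v : W} (h2 : v ∈ G₂.verts) (h1 : v ∉ G₁.verts) :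
    hullN G₁ G₂ v = {ℓ ∈ G₂.N v | ∀ u ∈ G₁.verts, ⟪ℓ, v⟫ ≤ ⟪ℓ, u⟫} := by
  rw [hullN, if_neg (fun h => h1 h.1), if_neg h1]

/-- The key covering lemma: every point of the common support lies in a hull cone. -/
lemma hull_cover [FiniteDimensional ℝ W] (G₁ G₂ : VCC W) (heq : G₁.Supp = G₂.Supp) :
    ∀ ℓ ∈ G₁.Supp, ∃ v ∈ hullVerts G₁ G₂, ℓ ∈ hullN G₁ G₂ v := by
  -- The union of the hull cones is closed.
  have hVfin : (hullVerts G₁ G₂).Finite := by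
    apply (G₁.finite.union G₂.finite).subset
    rintro v ((⟨h1, _, _⟩ | ⟨h1, _, _⟩) | ⟨h2, _, _⟩)
    exacts [Or.inl h1, Or.inl h1, Or.inr h2]
  have hS_closed : IsClosed (⋃ v ∈ hullVerts G₁ G₂, hullN G₁ G₂ v) := by
    refine hVfin.isClosed_biUnion fun v hv => ?_
    rcases hv with ((⟨h1, h2, _⟩ | ⟨h1, h2, _⟩) | ⟨h2, h1, _⟩)
    · rw [hullN_a G₁ G₂ h1 h2]
      exact (G₁.N_closed h1).inter (G₂.N_closed h2)
    · rw [hullN_b G₁ G₂ h1 h2]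
      have : {ℓ | ℓ ∈ G₁.N v ∧ ∀ u ∈ G₂.verts, ⟪ℓ, v⟫ ≤ ⟪ℓ, u⟫}
          = G₁.N v ∩ ⋂ u ∈ G₂.verts, {ℓ : W | ⟪ℓ, v⟫ ≤ ⟪ℓ, u⟫} := by
        ext x; simp [Set.mem_iInter]
      rw [this]
      exact (G₁.N_closed h1).inter (isClosed_biInter fun u _ =>
        isClosed_le (continuous_id.inner continuous_const)
          (continuous_id.inner continuous_const))
    · rw [hullN_c G₁ G₂ h2 h1]
      have : {ℓ | ℓ ∈ G₂.N v ∧ ∀ u ∈ G₁.verts, ⟪ℓ, v⟫ ≤ ⟪ℓ, u⟫}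
          = G₂.N v ∩ ⋂ u ∈ G₁.verts, {ℓ : W | ⟪ℓ, v⟫ ≤ ⟪ℓ, u⟫} := by
        ext x; simp [Set.mem_iInter]
      rw [this]
      exact (G₂.N_closed h2).inter (isClosed_biInter fun u _ =>
        isClosed_le (continuous_id.inner continuous_const)
          (continuous_id.inner continuous_const))
  -- The "bad" set: frontiers of the G₂ cones and comparison hyperplanes.
  set 𝒮 : Set (Set W) :=
    ((fun w => frontier (G₂.N w)) '' G₂.verts) ∪
    ((fun p : W × W => {x : W | ⟪x, p.1 - p.2⟫ = 0}) ''
      ((G₁.verts ×ˢ G₂.verts) ∩ {p | p.1 ≠ p.2})) with h𝒮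
  have h𝒮fin : 𝒮.Finite :=
    (G₂.finite.image _).union ((((G₁.finite.prod G₂.finite).inter_of_left _).image _))
  have h𝒮prop : ∀ s ∈ 𝒮, IsClosed s ∧ interior s = ∅ := by
    rintro s (⟨w, hw, rfl⟩ | ⟨⟨u, u'⟩, ⟨⟨hu, hu'⟩, hne⟩, rfl⟩)
    · exact ⟨isClosed_frontier, interior_frontier (G₂.N_closed hw)⟩
    · refine ⟨isClosed_eq (continuous_id.inner continuous_const) continuous_const, ?_⟩
      exact hyperplane_interior_empty (sub_ne_zero.mpr hne)
  obtain ⟨hBint, hBcl⟩ := sUnion_interior_empty h𝒮fin h𝒮prop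
  have hBc_dense : Dense (⋃₀ 𝒮)ᶜ := interior_eq_empty_iff_dense_compl.mp hBint
  -- Main argument.
  intro ℓ hℓ
  rw [VCC.Supp, Set.mem_iUnion₂] at hℓ
  obtain ⟨v, hv, hℓv⟩ := hℓ
  -- Every "generic" point of interior (G₁.N v) lies in the union of hull cones.
  have hgen : interior (G₁.N v) ∩ (⋃₀ 𝒮)ᶜ ⊆ ⋃ x ∈ hullVerts G₁ G₂, hullN G₁ G₂ x := by
    rintro ℓ' ⟨hint, hB⟩
    have hℓN1 : ℓ' ∈ G₁.N v := interior_subset hint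
    have hℓSupp2 : ℓ' ∈ G₂.Supp := by
      rw [← heq, VCC.Supp, Set.mem_iUnion₂]; exact ⟨v, hv, hℓN1⟩
    rw [VCC.Supp, Set.mem_iUnion₂] at hℓSupp2
    obtain ⟨w, hw, hℓw⟩ := hℓSupp2
    have hwint : ℓ' ∈ interior (G₂.N w) := by
      by_contra hcon
      have hfr : ℓ' ∈ frontier (G₂.N w) := by
        rw [(G₂.N_closed hw).frontier_eq]; exact ⟨hℓw, hcon⟩
      exact hB ⟨frontier (G₂.N w), Or.inl ⟨w, hw, rfl⟩, hfr⟩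
    by_cases hvw : v = w
    · subst hvw
      refine Set.mem_biUnion (Or.inl (Or.inl ⟨hv, hw, ⟨ℓ', ?_⟩⟩)) ?_
      · rw [interior_inter]; exact ⟨hint, hwint⟩
      · rw [hullN_a G₁ G₂ hv hw]; exact ⟨hℓN1, hℓw⟩
    · have hne : ⟪ℓ', v⟫ ≠ ⟪ℓ', w⟫ := by
        intro hcon
        apply hB
        refine ⟨{x : W | ⟪x, v - w⟫ = 0}, Or.inr ⟨(v, w), ⟨⟨hv, hw⟩, hvw⟩, rfl⟩, ?_⟩
        simp only [Set.mem_setOf_eq, inner_sub_right]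
        rw [hcon]; ring
      rcases lt_or_gt_of_ne hne with hlt | hgt
      · -- v is a type-(b) vertex
        have hstrict : ∀ u ∈ G₂.verts, ⟪ℓ', v⟫ < ⟪ℓ', u⟫ := fun u hu =>
          lt_of_lt_of_le hlt (G₂.ineq w hw u hu ℓ' hℓw)
        have hvnot2 : v ∉ G₂.verts := fun hv2 => lt_irrefl _ (hstrict v hv2)
        refine Set.mem_biUnion (Or.inl (Or.inr ⟨hv, hvnot2, ℓ', hint, hstrict⟩)) ?_
        rw [hullN_b G₁ G₂ hv hvnot2]
        exact ⟨hℓN1, fun u hu => (hstrict u hu).le⟩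
      · -- w is a type-(c) vertex
        have hstrict : ∀ u ∈ G₁.verts, ⟪ℓ', w⟫ < ⟪ℓ', u⟫ := fun u hu =>
          lt_of_lt_of_le hgt (G₁.ineq v hv u hu ℓ' hℓN1)
        have hwnot1 : w ∉ G₁.verts := fun hw1 => lt_irrefl _ (hstrict w hw1)
        refine Set.mem_biUnion (Or.inr ⟨hw, hwnot1, ℓ', hwint, hstrict⟩) ?_
        rw [hullN_c G₁ G₂ hw hwnot1]
        exact ⟨hℓw, fun u hu => (hstrict u hu).le⟩
  -- ℓ lies in the closure of the generic set, hence in the closed union.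
  obtain ⟨y, hy⟩ := G₁.fullDim v hv
  have h1 : ℓ ∈ closure (interior (G₁.N v)) :=
    mem_closure_interior_of_convex (G₁.N_convex hv) hℓv hy
  have h2 : interior (G₁.N v) ⊆ closure (interior (G₁.N v) ∩ (⋃₀ 𝒮)ᶜ) :=
    hBc_dense.open_subset_closure_inter isOpen_interior
  have h3 : ℓ ∈ closure (interior (G₁.N v) ∩ (⋃₀ 𝒮)ᶜ) :=
    (closure_minimal h2 isClosed_closure) h1
  have h4 : ℓ ∈ ⋃ x ∈ hullVerts G₁ G₂, hullN G₁ G₂ x :=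
    (closure_minimal hgen hS_closed) h3
  rw [Set.mem_iUnion₂] at h4
  obtain ⟨x, hx1, hx2⟩ := h4
  exact ⟨x, hx1, hx2⟩

end Aux

/-- the convex hull of two vertex-cone collections with equal
supports is again a vertex-cone collection, with the prescribed vertex set and
normal cones, and Supp(𝔊₁ ⊕ 𝔊₂) = Supp(𝔊₁) = Supp(𝔊₂). -/
theorem stmt_10 {W : Type*} [NormedAddCommGroup W] [InnerProductSpace ℝ W]
    [FiniteDimensional ℝ W] (G₁ G₂ : VCC W)
    (heq : G₁.Supp = G₂.Supp) :
    ∃ G : VCC W,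
      G.verts =
        ({v | v ∈ G₁.verts ∧ v ∈ G₂.verts ∧ (interior (G₁.N v ∩ G₂.N v)).Nonempty} ∪
         {v | v ∈ G₁.verts ∧ v ∉ G₂.verts ∧
            ∃ ℓ ∈ interior (G₁.N v), ∀ u ∈ G₂.verts, ⟪ℓ, v⟫ < ⟪ℓ, u⟫} ∪
         {v | v ∈ G₂.verts ∧ v ∉ G₁.verts ∧
            ∃ ℓ ∈ interior (G₂.N v), ∀ u ∈ G₁.verts, ⟪ℓ, v⟫ < ⟪ℓ, u⟫}) ∧
      (∀ v ∈ G.verts, v ∈ G₁.verts → v ∈ G₂.verts →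
        G.N v = G₁.N v ∩ G₂.N v) ∧
      (∀ v ∈ G.verts, v ∈ G₁.verts → v ∉ G₂.verts →
        G.N v = {ℓ ∈ G₁.N v | ∀ u ∈ G₂.verts, ⟪ℓ, v⟫ ≤ ⟪ℓ, u⟫}) ∧
      (∀ v ∈ G.verts, v ∈ G₂.verts → v ∉ G₁.verts →
        G.N v = {ℓ ∈ G₂.N v | ∀ u ∈ G₁.verts, ⟪ℓ, v⟫ ≤ ⟪ℓ, u⟫}) ∧
      G.Supp = G₁.Supp := by
  classical
  -- finiteness
  have hVfin : (hullVerts G₁ G₂).Finite := by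
    apply (G₁.finite.union G₂.finite).subset
    rintro v ((⟨h1, _, _⟩ | ⟨h1, _, _⟩) | ⟨h2, _, _⟩)
    exacts [Or.inl h1, Or.inl h1, Or.inr h2]
  -- nonemptiness
  have hVne : (hullVerts G₁ G₂).Nonempty := by
    obtain ⟨v₀, hv₀⟩ := G₁.nonempty
    obtain ⟨ℓ₀, hℓ₀⟩ := G₁.fullDim v₀ hv₀
    have : ℓ₀ ∈ G₁.Supp := by
      rw [VCC.Supp, Set.mem_iUnion₂]; exact ⟨v₀, hv₀, interior_subset hℓ₀⟩
    obtain ⟨v, hv, _⟩ := hull_cover G₁ G₂ heq ℓ₀ this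
    exact ⟨v, hv⟩
  -- polyhedrality
  have hpoly : ∀ v ∈ hullVerts G₁ G₂,
      ∃ s : Finset W, hullN G₁ G₂ v = {x | ∀ ℓ ∈ s, ⟪ℓ, x⟫ ≤ 0} := by
    rintro v ((⟨h1, h2, _⟩ | ⟨h1, h2, _⟩) | ⟨h2, h1, _⟩)
    · obtain ⟨s₁, hs₁⟩ := G₁.polyhedral v h1
      obtain ⟨s₂, hs₂⟩ := G₂.polyhedral v h2
      refine ⟨s₁ ∪ s₂, ?_⟩
      rw [hullN_a G₁ G₂ h1 h2, hs₁, hs₂]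
      ext x
      simp only [Set.mem_inter_iff, Set.mem_setOf_eq, Finset.mem_union]
      constructor
      · rintro ⟨ha, hb⟩ ℓ (hℓ | hℓ); exacts [ha ℓ hℓ, hb ℓ hℓ]
      · intro h; exact ⟨fun ℓ hℓ => h ℓ (Or.inl hℓ), fun ℓ hℓ => h ℓ (Or.inr hℓ)⟩
    · obtain ⟨s₁, hs₁⟩ := G₁.polyhedral v h1
      refine ⟨s₁ ∪ G₂.finite.toFinset.image (fun u => v - u), ?_⟩
      rw [hullN_b G₁ G₂ h1 h2, hs₁]
      ext x
      simp only [Set.mem_setOf_eq, Set.sep_setOf, Finset.mem_union, Finset.mem_image,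
        Set.Finite.mem_toFinset]
      constructor
      · rintro ⟨ha, hb⟩ ℓ (hℓ | ⟨u, hu, rfl⟩)
        · exact ha ℓ hℓ
        · have := hb u hu
          rw [inner_sub_left, sub_nonpos, ← real_inner_comm v x, ← real_inner_comm u x]
          exact this
      · intro h
        refine ⟨fun ℓ hℓ => h ℓ (Or.inl hℓ), fun u hu => ?_⟩
        have := h (v - u) (Or.inr ⟨u, hu, rfl⟩)
        rw [inner_sub_left, sub_nonpos, ← real_inner_comm v x, ← real_inner_comm u x] at this
        exact this
    · obtain ⟨s₂, hs₂⟩ := G₂.polyhedral v h2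
      refine ⟨s₂ ∪ G₁.finite.toFinset.image (fun u => v - u), ?_⟩
      rw [hullN_c G₁ G₂ h2 h1, hs₂]
      ext x
      simp only [Set.mem_setOf_eq, Set.sep_setOf, Finset.mem_union, Finset.mem_image,
        Set.Finite.mem_toFinset]
      constructor
      · rintro ⟨ha, hb⟩ ℓ (hℓ | ⟨u, hu, rfl⟩)
        · exact ha ℓ hℓ
        · have := hb u hu
          rw [inner_sub_left, sub_nonpos, ← real_inner_comm v x, ← real_inner_comm u x]
          exact this
      · intro h
        refine ⟨fun ℓ hℓ => h ℓ (Or.inl hℓ), fun u hu => ?_⟩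
        have := h (v - u) (Or.inr ⟨u, hu, rfl⟩)
        rw [inner_sub_left, sub_nonpos, ← real_inner_comm v x, ← real_inner_comm u x] at this
        exact this
  -- full-dimensionality
  have hfull : ∀ v ∈ hullVerts G₁ G₂, (interior (hullN G₁ G₂ v)).Nonempty := by
    rintro v ((⟨h1, h2, hne⟩ | ⟨h1, h2, ℓ, hℓ, hstrict⟩) | ⟨h2, h1, ℓ, hℓ, hstrict⟩)
    · rw [hullN_a G₁ G₂ h1 h2]; exact hne
    · rw [hullN_b G₁ G₂ h1 h2]
      refine ⟨ℓ, ?_⟩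
      have hopen : IsOpen (interior (G₁.N v) ∩ ⋂ u ∈ G₂.verts, {x : W | ⟪x, v⟫ < ⟪x, u⟫}) := by
        refine isOpen_interior.inter (G₂.finite.isOpen_biInter fun u _ => ?_)
        exact isOpen_lt (continuous_id.inner continuous_const)
          (continuous_id.inner continuous_const)
      have hsub : interior (G₁.N v) ∩ (⋂ u ∈ G₂.verts, {x : W | ⟪x, v⟫ < ⟪x, u⟫})
          ⊆ {ℓ ∈ G₁.N v | ∀ u ∈ G₂.verts, ⟪ℓ, v⟫ ≤ ⟪ℓ, u⟫} := by
        rintro x ⟨hx1, hx2⟩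
        rw [Set.mem_iInter₂] at hx2
        exact ⟨interior_subset hx1, fun u hu => (hx2 u hu).le⟩
      refine interior_maximal hsub hopen ⟨hℓ, ?_⟩
      rw [Set.mem_iInter₂]
      exact hstrict
    · rw [hullN_c G₁ G₂ h2 h1]
      refine ⟨ℓ, ?_⟩
      have hopen : IsOpen (interior (G₂.N v) ∩ ⋂ u ∈ G₁.verts, {x : W | ⟪x, v⟫ < ⟪x, u⟫}) := by
        refine isOpen_interior.inter (G₁.finite.isOpen_biInter fun u _ => ?_)
        exact isOpen_lt (continuous_id.inner continuous_const)
          (continuous_id.inner continuous_const)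
      have hsub : interior (G₂.N v) ∩ (⋂ u ∈ G₁.verts, {x : W | ⟪x, v⟫ < ⟪x, u⟫})
          ⊆ {ℓ ∈ G₂.N v | ∀ u ∈ G₁.verts, ⟪ℓ, v⟫ ≤ ⟪ℓ, u⟫} := by
        rintro x ⟨hx1, hx2⟩
        rw [Set.mem_iInter₂] at hx2
        exact ⟨interior_subset hx1, fun u hu => (hx2 u hu).le⟩
      refine interior_maximal hsub hopen ⟨hℓ, ?_⟩
      rw [Set.mem_iInter₂]
      exact hstrict
  -- the defining inequalities
  have hineq : ∀ v ∈ hullVerts G₁ G₂, ∀ u ∈ hullVerts G₁ G₂,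
      ∀ ℓ ∈ hullN G₁ G₂ v, ⟪ℓ, v⟫ ≤ ⟪ℓ, u⟫ := by
    intro v hv u hu ℓ hℓ
    have hu' : u ∈ G₁.verts ∨ u ∈ G₂.verts := by
      rcases hu with ((⟨h1, _, _⟩ | ⟨h1, _, _⟩) | ⟨h2, _, _⟩)
      exacts [Or.inl h1, Or.inl h1, Or.inr h2]
    rcases hv with ((⟨h1, h2, _⟩ | ⟨h1, h2, _⟩) | ⟨h2, h1, _⟩)
    · rw [hullN_a G₁ G₂ h1 h2] at hℓ
      rcases hu' with hu1 | hu2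
      · exact G₁.ineq v h1 u hu1 ℓ hℓ.1
      · exact G₂.ineq v h2 u hu2 ℓ hℓ.2
    · rw [hullN_b G₁ G₂ h1 h2] at hℓ
      rcases hu' with hu1 | hu2
      · exact G₁.ineq v h1 u hu1 ℓ hℓ.1
      · exact hℓ.2 u hu2
    · rw [hullN_c G₁ G₂ h2 h1] at hℓ
      rcases hu' with hu1 | hu2
      · exact hℓ.2 u hu1
      · exact G₂.ineq v h2 u hu2 ℓ hℓ.1
  refine ⟨⟨hullVerts G₁ G₂, hVfin, hVne, hullN G₁ G₂, hpoly, hfull, hineq⟩,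
    rfl, ?_, ?_, ?_, ?_⟩
  · intro v _ h1 h2; exact hullN_a G₁ G₂ h1 h2
  · intro v _ h1 h2; exact hullN_b G₁ G₂ h1 h2
  · intro v _ h2 h1; exact hullN_c G₁ G₂ h2 h1
  · apply Set.Subset.antisymm
    · rw [VCC.Supp]
      refine Set.iUnion₂_subset ?_
      rintro v hv
      show hullN G₁ G₂ v ⊆ G₁.Supp
      rcases hv with ((⟨h1, h2, _⟩ | ⟨h1, h2, _⟩) | ⟨h2, h1, _⟩)
      · rw [hullN_a G₁ G₂ h1 h2]
        exact (Set.inter_subset_left).trans (Set.subset_biUnion_of_mem h1)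
      · rw [hullN_b G₁ G₂ h1 h2]
        exact (Set.sep_subset _ _).trans (Set.subset_biUnion_of_mem h1)
      · rw [hullN_c G₁ G₂ h2 h1, heq]
        exact (Set.sep_subset _ _).trans (Set.subset_biUnion_of_mem h2)
    · intro ℓ hℓ
      obtain ⟨v, hv, hℓv⟩ := hull_cover G₁ G₂ heq ℓ hℓ
      rw [VCC.Supp, Set.mem_iUnion₂]
      exact ⟨v, hv, hℓv⟩
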